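/- There exists a cubic graph of order 16 whose coalition number equals 9. -/

import Mathlib

/-- `S` dominates the vertex `v`: `v ∈ S` or some vertex of `S` is adjacent to `v`. -/
def SimpleGraph.DominatesVert {V : Type*} (G : SimpleGraph V) (S : Finset V) (v : V) : Prop :=
  v ∈ S ∨ ∃ u ∈ S, G.Adj u v

/-- `S` is a dominating set of `G`. -/
def SimpleGraph.IsDominatingSet {V : Type*} (G : SimpleGraph V) (S : Finset V) : Prop :=
  ∀ v, G.DominatesVert S v

/-- A coalition partition of `G`: a partition of the vertex set into nonempty parts,
each of which is either a dominating singleton, or a non-dominating set forming a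
coalition (dominating union) with another non-dominating part. -/
def SimpleGraph.IsCoalitionPartition {V : Type*} [Fintype V] [DecidableEq V]
    (G : SimpleGraph V) (P : Finset (Finset V)) : Prop :=
  (∀ A ∈ P, A.Nonempty) ∧
  (∀ A ∈ P, ∀ B ∈ P, A ≠ B → Disjoint A B) ∧
  (∀ v : V, ∃ A ∈ P, v ∈ A) ∧
  ∀ A ∈ P,
    (∃ v, A = {v} ∧ G.IsDominatingSet A) ∨
    (¬ G.IsDominatingSet A ∧
      ∃ B ∈ P, B ≠ A ∧ ¬ G.IsDominatingSet B ∧ G.IsDominatingSet (A ∪ B))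

/-- The coalition number of `G`: the maximum number of parts in a coalition partition. -/
noncomputable def SimpleGraph.coalitionNumber {V : Type*} [Fintype V] [DecidableEq V]
    (G : SimpleGraph V) : ℕ :=
  sSup {k | ∃ P : Finset (Finset V), G.IsCoalitionPartition P ∧ P.card = k}

/-! ### A concrete cubic graph on 16 vertices -/

namespace CoalNine

/-- Open adjacency bitmasks of the graph. -/
def adjMask : Fin 16 → ℕ :=
  ![14, 13, 8195, 259, 224, 208, 8240, 560, 16904, 33152, 38912, 21504, 19456, 32836, 6400, 9728]

/-- Closed neighborhood bitmasks. -/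
def clMask : Fin 16 → ℕ :=
  ![15, 15, 8199, 267, 240, 240, 8304, 688, 17160, 33664, 39936, 23552, 23552, 41028, 22784, 42496]

def G : SimpleGraph (Fin 16) where
  Adj a b := Nat.testBit (adjMask a) b.val
  symm := ⟨by
    intro a b h
    exact (by decide : ∀ a b : Fin 16, Nat.testBit (adjMask a) b.val → Nat.testBit (adjMask b) a.val) a b h⟩
  loopless := ⟨by
    intro a h
    exact (by decide : ∀ a : Fin 16, ¬ Nat.testBit (adjMask a) a.val) a h⟩

instance Gdec : DecidableRel G.Adj := fun _ _ => inferInstanceAs (Decidable (_ = true))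

instance : ∀ S (v : Fin 16), Decidable (G.DominatesVert S v) := fun _ _ =>
  inferInstanceAs (Decidable (_ ∨ _))

instance : DecidablePred G.IsDominatingSet := fun _ =>
  inferInstanceAs (Decidable (∀ _, _))

abbrev V16 := Fin 16

/-- Closed neighborhood as a finset. -/
def Ncl (w : V16) : Finset V16 := Finset.univ.filter (fun u => u = w ∨ G.Adj u w)

lemma mem_Ncl {u w : V16} : u ∈ Ncl w ↔ (u = w ∨ G.Adj u w) := by
  simp [Ncl]

lemma Ncl_comm {u w : V16} : u ∈ Ncl w ↔ w ∈ Ncl u := by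
  simp only [mem_Ncl]
  constructor
  · rintro (rfl | h); · exact Or.inl rfl
    · exact Or.inr (G.adj_symm h)
  · rintro (rfl | h); · exact Or.inl rfl
    · exact Or.inr (G.adj_symm h)

lemma self_mem_Ncl (w : V16) : w ∈ Ncl w := mem_Ncl.mpr (Or.inl rfl)

lemma card_Ncl : ∀ w : V16, (Ncl w).card = 4 := by decide

lemma no_triple_twins_mask : ∀ x y z : V16, x ≠ y → x ≠ z → y ≠ z →
    ¬ (clMask x = clMask y ∧ clMask x = clMask z) := by decide

lemma Ncl_eq_clMask : ∀ x y : V16, Ncl x = Ncl y → clMask x = clMask y := by decide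

lemma no_triple_twins : ∀ x y z : V16, x ≠ y → x ≠ z → y ≠ z →
    ¬ (Ncl x = Ncl y ∧ Ncl x = Ncl z) := by
  intro x y z hxy hxz hyz ⟨h1, h2⟩
  exact no_triple_twins_mask x y z hxy hxz hyz
    ⟨Ncl_eq_clMask x y h1, Ncl_eq_clMask x z h2⟩

lemma domV_iff {S : Finset V16} {v : V16} :
    G.DominatesVert S v ↔ ∃ u ∈ S, u ∈ Ncl v := by
  unfold SimpleGraph.DominatesVert
  constructor
  · rintro (h | ⟨u, hu, hadj⟩)
    · exact ⟨v, h, self_mem_Ncl v⟩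
    · exact ⟨u, hu, mem_Ncl.mpr (Or.inr hadj)⟩
  · rintro ⟨u, hu, hv⟩
    rcases mem_Ncl.mp hv with rfl | h
    · exact Or.inl hu
    · exact Or.inr ⟨u, hu, h⟩

/-- Any dominating set has at least 4·|S| coverage bound: 16 ≤ 4|S|. -/
lemma dom_card_bound {S : Finset V16} (h : G.IsDominatingSet S) : 16 ≤ 4 * S.card := by
  have hsub : (Finset.univ : Finset V16) ⊆ S.biUnion Ncl := by
    intro v _
    obtain ⟨u, hu, hv⟩ := domV_iff.mp (h v)
    exact Finset.mem_biUnion.mpr ⟨u, hu, Ncl_comm.mp hv⟩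
  have h1 : (16 : ℕ) ≤ (S.biUnion Ncl).card := by
    calc (16 : ℕ) = (Finset.univ : Finset V16).card := by simp
    _ ≤ (S.biUnion Ncl).card := Finset.card_le_card hsub
  have h2 : (S.biUnion Ncl).card ≤ ∑ u ∈ S, (Ncl u).card := Finset.card_biUnion_le
  have h3 : ∑ u ∈ S, (Ncl u).card = 4 * S.card := by
    rw [Finset.sum_congr rfl (fun u _ => card_Ncl u), Finset.sum_const, smul_eq_mul, mul_comm]
  omega

lemma dom_card_ge {S : Finset V16} (h : G.IsDominatingSet S) : 4 ≤ S.card := by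
  have := dom_card_bound h; omega

/-- If `B` has 3 elements and `B ∪ {x}` dominates, then `Ncl x` is exactly the complement
of the part covered by `B`. -/
lemma perfect_ext {B : Finset V16} {x : V16} (h3 : B.card = 3)
    (hdom : G.IsDominatingSet (B ∪ {x})) :
    Ncl x = Finset.univ \ B.biUnion Ncl := by
  set C := B.biUnion Ncl with hC
  have hCcard : C.card ≤ 12 := by
    have h2 : C.card ≤ ∑ u ∈ B, (Ncl u).card := Finset.card_biUnion_le
    have h3' : ∑ u ∈ B, (Ncl u).card = 4 * B.card := by
      rw [Finset.sum_congr rfl (fun u _ => card_Ncl u), Finset.sum_const, smul_eq_mul, mul_comm]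
    omega
  have hsub : Finset.univ \ C ⊆ Ncl x := by
    intro v hv
    obtain ⟨hv1, hv2⟩ := Finset.mem_sdiff.mp hv
    obtain ⟨u, hu, hvu⟩ := domV_iff.mp (hdom v)
    rcases Finset.mem_union.mp hu with hB | hx
    · exact absurd (Finset.mem_biUnion.mpr ⟨u, hB, Ncl_comm.mp hvu⟩) hv2
    · rcases Finset.mem_singleton.mp hx with rfl
      exact Ncl_comm.mp hvu
  have hcard : (Ncl x).card ≤ (Finset.univ \ C).card := by
    rw [card_Ncl, Finset.card_sdiff_of_subset (Finset.subset_univ C)]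
    simp only [Finset.card_univ, Fintype.card_fin]
    omega
  exact (Finset.eq_of_subset_of_card_le hsub hcard).symm

/-- Choice of the element of a finset (used for singletons). -/
noncomputable def pick (A : Finset V16) : V16 :=
  if h : A.Nonempty then A.min' h else 0

lemma pick_singleton (x : V16) : pick {x} = x := by
  rw [pick, dif_pos (Finset.singleton_nonempty x), Finset.min'_singleton]

lemma eq_singleton_pick {A : Finset V16} (h : A.card = 1) : A = {pick A} := by
  obtain ⟨x, rfl⟩ := Finset.card_eq_one.mp h
  rw [pick_singleton]

lemma pick_mem {A : Finset V16} (h : A.card = 1) : pick A ∈ A := by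
  obtain ⟨x, rfl⟩ := Finset.card_eq_one.mp h
  rw [pick_singleton]; simp

section Partition

variable {P : Finset (Finset V16)}

/-- The singleton parts of `P` that form a coalition with `B`. -/
def fib (P : Finset (Finset V16)) (B : Finset V16) : Finset (Finset V16) :=
  P.filter (fun A => A ≠ B ∧ G.IsDominatingSet (B ∪ A) ∧ A.card = 1)

lemma fib_subset (B : Finset V16) : fib P B ⊆ P := Finset.filter_subset _ _

lemma mem_fib {A B : Finset V16} :
    A ∈ fib P B ↔ A ∈ P ∧ A ≠ B ∧ G.IsDominatingSet (B ∪ A) ∧ A.card = 1 := by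
  simp [fib]

/-- Key fact: singleton partners of `B` lie inside `Ncl w` for any `w` not dominated by `B`. -/
lemma fib_pick_mem {A B : Finset V16} {w : V16} (hw : ¬ G.DominatesVert B w)
    (hA : A ∈ fib P B) : A = {pick A} ∧ pick A ∈ Ncl w := by
  obtain ⟨_, _, hdom, h1⟩ := mem_fib.mp hA
  obtain ⟨x, rfl⟩ := Finset.card_eq_one.mp h1
  rw [pick_singleton]
  refine ⟨rfl, ?_⟩
  have hd := hdom w
  unfold SimpleGraph.DominatesVert at hd hw
  push_neg at hw
  rcases hd with hmem | ⟨u, hu, hadj⟩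
  · rcases Finset.mem_union.mp hmem with hB | hx
    · exact absurd (Or.inl hB) (by tauto)
    · rcases Finset.mem_singleton.mp hx with rfl
      exact self_mem_Ncl w
  · rcases Finset.mem_union.mp hu with hB | hx
    · exact absurd hadj (hw.2 u hB)
    · rcases Finset.mem_singleton.mp hx with rfl
      exact mem_Ncl.mpr (Or.inr hadj)

lemma fib_injOn {B : Finset V16} : Set.InjOn pick (fib P B : Set (Finset V16)) := by
  intro A hA A' hA' heq
  have h1 : A = {pick A} := eq_singleton_pick (mem_fib.mp hA).2.2.2
  have h2 : A' = {pick A'} := eq_singleton_pick (mem_fib.mp hA').2.2.2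
  rw [h1, h2, heq]

/-- Capacity: at most 4 singleton partners. -/
lemma fib_card_le_four {B : Finset V16} (hB : ¬ G.IsDominatingSet B) :
    (fib P B).card ≤ 4 := by
  obtain ⟨w, hw⟩ := not_forall.mp hB
  have := Finset.card_le_card_of_injOn pick
    (fun A hA => (fib_pick_mem (P := P) hw hA).2) fib_injOn
  rw [card_Ncl] at this
  exact this

/-- A 3-element part has at most 2 singleton partners. -/
lemma fib_card_le_two (hdisj : ∀ A ∈ P, ∀ B ∈ P, A ≠ B → Disjoint A B)
    {B : Finset V16} (h3 : B.card = 3) : (fib P B).card ≤ 2 := by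
  by_contra h
  push_neg at h
  obtain ⟨T, hTsub, hTcard⟩ := Finset.exists_subset_card_eq h
  obtain ⟨A1, A2, A3, h12, h13, h23, rfl⟩ := Finset.card_eq_three.mp hTcard
  have m1 : A1 ∈ fib P B := hTsub (show A1 ∈ ({A1, A2, A3} : Finset (Finset V16)) by simp)
  have m2 : A2 ∈ fib P B := hTsub (show A2 ∈ ({A1, A2, A3} : Finset (Finset V16)) by simp)
  have m3 : A3 ∈ fib P B := hTsub (show A3 ∈ ({A1, A2, A3} : Finset (Finset V16)) by simp)
  obtain ⟨_, _, hd1, hc1⟩ := mem_fib.mp m1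
  obtain ⟨_, _, hd2, hc2⟩ := mem_fib.mp m2
  obtain ⟨_, _, hd3, hc3⟩ := mem_fib.mp m3
  obtain ⟨x1, rfl⟩ := Finset.card_eq_one.mp hc1
  obtain ⟨x2, rfl⟩ := Finset.card_eq_one.mp hc2
  obtain ⟨x3, rfl⟩ := Finset.card_eq_one.mp hc3
  have e1 := perfect_ext h3 hd1
  have e2 := perfect_ext h3 hd2
  have e3 := perfect_ext h3 hd3
  have hx12 : x1 ≠ x2 := fun h => h12 (by rw [h])
  have hx13 : x1 ≠ x3 := fun h => h13 (by rw [h])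
  have hx23 : x2 ≠ x3 := fun h => h23 (by rw [h])
  exact no_triple_twins x1 x2 x3 hx12 hx13 hx23 ⟨e1.trans e2.symm, e1.trans e3.symm⟩

end Partition

/-- The upper bound: any coalition partition of `G` has at most 9 parts. -/
theorem upper_bound (P : Finset (Finset V16)) (hP : G.IsCoalitionPartition P) :
    P.card ≤ 9 := by
  obtain ⟨hne, hdisj, hcov, hco⟩ := hP
  -- every part is non-dominating and has a partner
  have hparts : ∀ A ∈ P, ¬ G.IsDominatingSet A ∧
      ∃ B ∈ P, B ≠ A ∧ ¬ G.IsDominatingSet B ∧ G.IsDominatingSet (A ∪ B) := by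
    intro A hA
    rcases hco A hA with ⟨v, rfl, hdom⟩ | h
    · have := dom_card_ge hdom
      simp at this
    · exact h
  by_contra hk
  push_neg at hk
  -- the four size classes
  set S1 := P.filter (fun A => A.card = 1) with hS1
  set S2 := P.filter (fun A => A.card = 2) with hS2
  set S3 := P.filter (fun A => A.card = 3) with hS3
  set S4 := P.filter (fun A => 4 ≤ A.card) with hS4
  have hd12 : Disjoint S1 S2 := by
    rw [Finset.disjoint_left]; intro A h1 h2
    simp [hS1, hS2, Finset.mem_filter] at h1 h2; omega
  have hd13 : Disjoint S1 S3 := by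
    rw [Finset.disjoint_left]; intro A h1 h2
    simp [hS1, hS3, Finset.mem_filter] at h1 h2; omega
  have hd14 : Disjoint S1 S4 := by
    rw [Finset.disjoint_left]; intro A h1 h2
    simp [hS1, hS4, Finset.mem_filter] at h1 h2; omega
  have hd23 : Disjoint S2 S3 := by
    rw [Finset.disjoint_left]; intro A h1 h2
    simp [hS2, hS3, Finset.mem_filter] at h1 h2; omega
  have hd24 : Disjoint S2 S4 := by
    rw [Finset.disjoint_left]; intro A h1 h2
    simp [hS2, hS4, Finset.mem_filter] at h1 h2; omega
  have hd34 : Disjoint S3 S4 := by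
    rw [Finset.disjoint_left]; intro A h1 h2
    simp [hS3, hS4, Finset.mem_filter] at h1 h2; omega
  have hunion : S1 ∪ S2 ∪ S3 ∪ S4 = P := by
    ext A
    simp only [Finset.mem_union, hS1, hS2, hS3, hS4, Finset.mem_filter]
    constructor
    · rintro (((⟨h, _⟩ | ⟨h, _⟩) | ⟨h, _⟩) | ⟨h, _⟩) <;> exact h
    · intro hA
      have : 1 ≤ A.card := Finset.card_pos.mpr (hne A hA)
      rcases Nat.lt_or_ge A.card 4 with h4 | h4
      · interval_cases h : A.card <;> tauto
      · tauto
  -- cardinalities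
  have hcardsum : S1.card + S2.card + S3.card + S4.card = P.card := by
    rw [← hunion]
    rw [Finset.card_union_of_disjoint (by
      refine Finset.disjoint_union_left.mpr ⟨Finset.disjoint_union_left.mpr ⟨hd14, hd24⟩, hd34⟩)]
    rw [Finset.card_union_of_disjoint (Finset.disjoint_union_left.mpr ⟨hd13, hd23⟩)]
    rw [Finset.card_union_of_disjoint hd12]
  -- total size is 16
  have hsum16 : ∑ A ∈ P, A.card = 16 := by
    have hbu : (P.biUnion fun A => A) = Finset.univ := by
      apply Finset.eq_univ_of_forall
      intro v
      obtain ⟨A, hA, hv⟩ := hcov v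
      exact Finset.mem_biUnion.mpr ⟨A, hA, hv⟩
    have := Finset.card_biUnion (fun A hA B hB hAB => hdisj A hA B hB hAB)
    rw [hbu] at this
    simp only [Finset.card_univ, Fintype.card_fin] at this
    exact this.symm
  have hsum_split : ∑ A ∈ S1, A.card + ∑ A ∈ S2, A.card + ∑ A ∈ S3, A.card
      + ∑ A ∈ S4, A.card = 16 := by
    rw [← hsum16, ← hunion]
    rw [Finset.sum_union (by
      refine Finset.disjoint_union_left.mpr ⟨Finset.disjoint_union_left.mpr ⟨hd14, hd24⟩, hd34⟩)]
    rw [Finset.sum_union (Finset.disjoint_union_left.mpr ⟨hd13, hd23⟩)]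
    rw [Finset.sum_union hd12]
  have hsumS1 : ∑ A ∈ S1, A.card = S1.card := by
    rw [Finset.sum_congr rfl (fun A hA => (Finset.mem_filter.mp hA).2)]
    simp [mul_comm, hS1]
  have hsumS2 : ∑ A ∈ S2, A.card = 2 * S2.card := by
    rw [Finset.sum_congr rfl (fun A hA => (Finset.mem_filter.mp hA).2)]
    simp [mul_comm, hS2]
  have hsumS3 : ∑ A ∈ S3, A.card = 3 * S3.card := by
    rw [Finset.sum_congr rfl (fun A hA => (Finset.mem_filter.mp hA).2)]
    simp [mul_comm, hS3]
  have hsumS4 : 4 * S4.card ≤ ∑ A ∈ S4, A.card := by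
    have := Finset.card_nsmul_le_sum S4 (fun A => A.card) 4
      (fun A hA => (Finset.mem_filter.mp hA).2)
    simpa [mul_comm] using this
  -- capacity inequality : S1.card ≤ 2 * S3.card + 4 * S4.card
  have hfibsub : S1 ⊆ (S3 ∪ S4).biUnion (fib P) := by
    intro A hA
    obtain ⟨hAP, hc1⟩ := Finset.mem_filter.mp hA
    obtain ⟨_, B, hBP, hBA, hBnd, hdom⟩ := hparts A hAP
    have hBcard : 3 ≤ B.card := by
      have h4 := dom_card_ge hdom
      have hle : (A ∪ B).card ≤ A.card + B.card := Finset.card_union_le A B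
      omega
    have hBmem : B ∈ S3 ∪ S4 := by
      simp only [Finset.mem_union, hS3, hS4, Finset.mem_filter]
      rcases Nat.eq_or_lt_of_le hBcard with h | h
      · exact Or.inl ⟨hBP, h.symm⟩
      · exact Or.inr ⟨hBP, h⟩
    refine Finset.mem_biUnion.mpr ⟨B, hBmem, mem_fib.mpr ⟨hAP, hBA.symm, ?_, hc1⟩⟩
    rwa [Finset.union_comm]
  have hcap : S1.card ≤ 2 * S3.card + 4 * S4.card := by
    have h1 : S1.card ≤ ∑ B ∈ S3 ∪ S4, (fib P B).card :=
      le_trans (Finset.card_le_card hfibsub) Finset.card_biUnion_le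
    have h2 : ∑ B ∈ S3, (fib P B).card ≤ 2 * S3.card := by
      have := Finset.sum_le_card_nsmul S3 (fun B => (fib P B).card) 2
        (fun B hB => fib_card_le_two hdisj (Finset.mem_filter.mp hB).2)
      simpa [mul_comm] using this
    have h3 : ∑ B ∈ S4, (fib P B).card ≤ 4 * S4.card := by
      have := Finset.sum_le_card_nsmul S4 (fun B => (fib P B).card) 4
        (fun B hB => fib_card_le_four (hparts B (Finset.mem_filter.mp hB).1).1)
      simpa [mul_comm] using this
    rw [Finset.sum_union hd34] at h1
    omega
  -- arithmetic forces the (1^8,4,4) shape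
  have hshape : S1.card = 8 ∧ S2.card = 0 ∧ S3.card = 0 ∧ S4.card = 2 := by omega
  obtain ⟨ha8, hb0, ht0, hq2⟩ := hshape
  obtain ⟨B1, B2, hB12, hS4eq⟩ := Finset.card_eq_two.mp hq2
  have hB1mem : B1 ∈ S4 := by rw [hS4eq]; simp
  have hB2mem : B2 ∈ S4 := by rw [hS4eq]; simp
  have hB1P : B1 ∈ P := (Finset.mem_filter.mp hB1mem).1
  have hB2P : B2 ∈ P := (Finset.mem_filter.mp hB2mem).1
  have hB1big : 4 ≤ B1.card := (Finset.mem_filter.mp hB1mem).2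
  have hB2big : 4 ≤ B2.card := (Finset.mem_filter.mp hB2mem).2
  have hB1nd : ¬ G.IsDominatingSet B1 := (hparts B1 hB1P).1
  have hB2nd : ¬ G.IsDominatingSet B2 := (hparts B2 hB2P).1
  -- S3 empty, so all singles' partners are B1 or B2
  have hS3empty : S3 = ∅ := Finset.card_eq_zero.mp ht0
  have hsub2 : S1 ⊆ fib P B1 ∪ fib P B2 := by
    intro A hA
    have := hfibsub hA
    rw [hS3empty] at this
    simp only [Finset.empty_union, hS4eq] at this
    rcases Finset.mem_biUnion.mp this with ⟨B, hB, hAB⟩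
    rcases Finset.mem_insert.mp hB with rfl | hB
    · exact Finset.mem_union_left _ hAB
    · rcases Finset.mem_singleton.mp hB with rfl
      exact Finset.mem_union_right _ hAB
  have hf1le : (fib P B1).card ≤ 4 := fib_card_le_four hB1nd
  have hf2le : (fib P B2).card ≤ 4 := fib_card_le_four hB2nd
  have huc : 8 ≤ (fib P B1 ∪ fib P B2).card := by
    have := Finset.card_le_card hsub2
    omega
  have hiu := Finset.card_union_add_card_inter (fib P B1) (fib P B2)
  have hinter : (fib P B1 ∩ fib P B2).card = 0 := by
    have := Finset.card_union_le (fib P B1) (fib P B2)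
    omega
  have hfibdisj : fib P B1 ∩ fib P B2 = ∅ := Finset.card_eq_zero.mp hinter
  have hf1 : (fib P B1).card = 4 := by
    have := Finset.card_union_le (fib P B1) (fib P B2)
    omega
  have hf2 : (fib P B2).card = 4 := by
    have := Finset.card_union_le (fib P B1) (fib P B2)
    omega
  -- endgame
  obtain ⟨w2, hw2⟩ := not_forall.mp hB2nd
  have himage : (fib P B2).image pick = Ncl w2 := by
    apply Finset.eq_of_subset_of_card_le
    · intro x hx
      obtain ⟨A, hA, rfl⟩ := Finset.mem_image.mp hx
      exact (fib_pick_mem hw2 hA).2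
    · rw [card_Ncl, Finset.card_image_of_injOn fib_injOn, hf2]
  -- a member of fib B1
  have hf1ne : (fib P B1).Nonempty := Finset.card_pos.mp (by omega)
  obtain ⟨A, hA⟩ := hf1ne
  obtain ⟨hAP, hAB1, hAdom, hAc1⟩ := mem_fib.mp hA
  -- facts about members of fib B2
  have hmemNcl : ∀ u ∈ Ncl w2, ∃ A' ∈ fib P B2, u ∈ A' := by
    intro u hu
    rw [← himage] at hu
    obtain ⟨A', hA', rfl⟩ := Finset.mem_image.mp hu
    exact ⟨A', hA', pick_mem (mem_fib.mp hA').2.2.2⟩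
  -- derive the contradiction: B1 ∪ A cannot dominate w2
  have hd := hAdom w2
  unfold SimpleGraph.DominatesVert at hd
  have hAsing : A = {pick A} := eq_singleton_pick hAc1
  have contra : False := by
    have hdistinct : ∀ A' ∈ fib P B2, A' ≠ B1 ∧ A' ≠ A := by
      intro A' hA'
      constructor
      · intro h
        have := (mem_fib.mp hA').2.2.2
        rw [h] at this; omega
      · intro h
        have : A ∈ fib P B1 ∩ fib P B2 := Finset.mem_inter.mpr ⟨hA, h ▸ hA'⟩
        rw [hfibdisj] at this
        exact absurd this (Finset.notMem_empty A)
    rcases hd with hmem | ⟨u, hu, hadj⟩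
    · rcases Finset.mem_union.mp hmem with hB | hx
      · -- w2 ∈ B1
        obtain ⟨A', hA', hw2A'⟩ := hmemNcl w2 (self_mem_Ncl w2)
        have hne' := (hdistinct A' hA').1
        have hdj := hdisj A' (fib_subset _ hA') B1 hB1P hne'
        exact Finset.disjoint_left.mp hdj hw2A' hB
      · -- w2 ∈ A
        obtain ⟨A', hA', hw2A'⟩ := hmemNcl w2 (self_mem_Ncl w2)
        have hne' := (hdistinct A' hA').2
        have hdj := hdisj A' (fib_subset _ hA') A hAP hne'
        exact Finset.disjoint_left.mp hdj hw2A' hx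
    · -- some u ∈ B1 ∪ A adjacent to w2
      have huN : u ∈ Ncl w2 := mem_Ncl.mpr (Or.inr hadj)
      obtain ⟨A', hA', huA'⟩ := hmemNcl u huN
      rcases Finset.mem_union.mp hu with hB | hx
      · have hne' := (hdistinct A' hA').1
        have hdj := hdisj A' (fib_subset _ hA') B1 hB1P hne'
        exact Finset.disjoint_left.mp hdj huA' hB
      · have hne' := (hdistinct A' hA').2
        have hdj := hdisj A' (fib_subset _ hA') A hAP hne'
        exact Finset.disjoint_left.mp hdj huA' hx
  exact contra

/-! ### The witness partition with 9 parts -/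

def P₀ : Finset (Finset V16) :=
  { {0}, {1}, {4}, {5}, {12}, {14, 15}, {6, 9, 11}, {2, 8, 10}, {3, 7, 13} }

set_option maxRecDepth 400000

lemma P₀_card : P₀.card = 9 := by decide

lemma P₀_coalition : G.IsCoalitionPartition P₀ := by
  refine ⟨?_, ?_, ?_, ?_⟩
  · intro A hA; fin_cases hA <;> decide
  · intro A hA B hB hne
    fin_cases hA <;> fin_cases hB <;> first | (exact absurd rfl hne) | decide
  · decide
  · intro A hA
    fin_cases hA
    · exact Or.inr ⟨by decide, {6, 9, 11}, by decide, by decide, by decide, by decide⟩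
    · exact Or.inr ⟨by decide, {6, 9, 11}, by decide, by decide, by decide, by decide⟩
    · exact Or.inr ⟨by decide, {2, 8, 10}, by decide, by decide, by decide, by decide⟩
    · exact Or.inr ⟨by decide, {2, 8, 10}, by decide, by decide, by decide, by decide⟩
    · exact Or.inr ⟨by decide, {3, 7, 13}, by decide, by decide, by decide, by decide⟩
    · exact Or.inr ⟨by decide, {3, 7, 13}, by decide, by decide, by decide, by decide⟩
    · exact Or.inr ⟨by decide, {0}, by decide, by decide, by decide, by decide⟩
    · exact Or.inr ⟨by decide, {4}, by decide, by decide, by decide, by decide⟩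
    · exact Or.inr ⟨by decide, {12}, by decide, by decide, by decide, by decide⟩

theorem G_regular : G.IsRegularOfDegree 3 := by
  have : ∀ v : V16, G.degree v = 3 := by decide
  exact this

theorem G_coalition_number : G.coalitionNumber = 9 := by
  unfold SimpleGraph.coalitionNumber
  have hmem : 9 ∈ {k | ∃ P : Finset (Finset V16), G.IsCoalitionPartition P ∧ P.card = k} :=
    ⟨P₀, P₀_coalition, P₀_card⟩
  have hub : ∀ k ∈ {k | ∃ P : Finset (Finset V16), G.IsCoalitionPartition P ∧ P.card = k},
      k ≤ 9 := by
    rintro k ⟨P, hP, rfl⟩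
    exact upper_bound P hP
  exact le_antisymm (csSup_le ⟨9, hmem⟩ hub) (le_csSup ⟨9, hub⟩ hmem)

end CoalNine

/-- There exists a cubic graph of order 16 whose coalition number equals 9. -/
theorem exists_cubic_order16_coalition_nine :
    ∃ G : SimpleGraph (Fin 16), ∃ _ : DecidableRel G.Adj, G.IsRegularOfDegree 3 ∧ G.coalitionNumber = 9 := by
  exact ⟨CoalNine.G, CoalNine.Gdec, CoalNine.G_regular, CoalNine.G_coalition_number⟩
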